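/- Nonlinear up-front rosca smoothness deviation bound: let 0 < α ≤ β, let v > 0, b̂ ≥ 0, ρ ∈ (0, 2/β], and let C : ℝ → ℝ satisfy C(x) ≤ β*x for x ≥ 0. If b̂ ≤ ρ*v, then (1/(ρ*v)) * ∫_{b̂}^{ρ*v} (v − β*x) dx ≥ v − b̂/ρ − β*ρ*v/2; and if b̂ > ρ*v, then 0 ≥ v − b̂/ρ − β*ρ*v/2. -/
import Mathlib


theorem upfront_deviation_bound (α β v bhat ρ : ℝ) (C : ℝ → ℝ)
    (hα : 0 < α) (hαβ : α ≤ β) (hv : 0 < v) (hb : 0 ≤ bhat)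
    (hρ0 : 0 < ρ) (hρ : ρ ≤ 2 / β)
    (hC : ∀ x : ℝ, 0 ≤ x → C x ≤ β * x) :
    (bhat ≤ ρ * v →
      (1 / (ρ * v)) * ∫ x in bhat..(ρ * v), (v - β * x)
        ≥ v - bhat / ρ - β * ρ * v / 2) ∧
    (bhat > ρ * v → (0 : ℝ) ≥ v - bhat / ρ - β * ρ * v / 2) := by
  have hβ : 0 < β := lt_of_lt_of_le hα hαβ
  have hρv : 0 < ρ * v := mul_pos hρ0 hv
  constructor
  · intro hle
    have hint : (∫ x in bhat..(ρ * v), (v - β * x))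
        = v * (ρ * v - bhat) - β * ((ρ * v) ^ 2 - bhat ^ 2) / 2 := by
      have h1 : (∫ x in bhat..(ρ * v), (v - β * x))
          = (∫ _x in bhat..(ρ * v), v) - ∫ x in bhat..(ρ * v), β * x := by
        apply intervalIntegral.integral_sub
        · exact intervalIntegrable_const
        · exact (intervalIntegral.intervalIntegrable_id).const_mul β
      rw [h1, intervalIntegral.integral_const, intervalIntegral.integral_const_mul,
        integral_id, smul_eq_mul]
      ring
    rw [hint, ge_iff_le, ← sub_nonneg]
    have key : (1 / (ρ * v)) * (v * (ρ * v - bhat) - β * ((ρ * v) ^ 2 - bhat ^ 2) / 2)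
        - (v - bhat / ρ - β * ρ * v / 2)
        = β * bhat ^ 2 / (2 * (ρ * v)) := by
      field_simp
      ring
    rw [key]
    positivity
  · intro hgt
    have : v < bhat / ρ := (lt_div_iff₀ hρ0).mpr (by linarith [mul_comm ρ v])
    nlinarith
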